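/- For every real x > 1, the function h(x,·) : (0,∞) → ℝ, y ↦ -y((log y)^2 - 2 log y + 2 - x), attains its maximum over (0,∞) at y = exp(√x), and this maximum value equals 2·exp(√x)·(√x - 1); i.e., for all y > 0, h(x,y) ≤ 2·exp(√x)·(√x - 1). -/
import Mathlib

theorem h_max (x : ℝ) (hx : 1 < x) :
    (-Real.exp (Real.sqrt x) *
        ((Real.log (Real.exp (Real.sqrt x)))^2 - 2 * Real.log (Real.exp (Real.sqrt x)) + 2 - x)
      = 2 * Real.exp (Real.sqrt x) * (Real.sqrt x - 1)) ∧
    ∀ y : ℝ, 0 < y →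
      -y * ((Real.log y)^2 - 2 * Real.log y + 2 - x)
        ≤ 2 * Real.exp (Real.sqrt x) * (Real.sqrt x - 1) := by
  have hx0 : (0:ℝ) ≤ x := by linarith
  set a := Real.sqrt x with ha_def
  have hsq : a ^ 2 = x := Real.sq_sqrt hx0
  have ha1 : 1 < a := by
    have := (Real.lt_sqrt (by norm_num : (0:ℝ) ≤ 1)).mpr (by linarith : (1:ℝ)^2 < x)
    simpa using this
  constructor
  · rw [Real.log_exp]
    nlinarith [Real.exp_pos a]
  · intro y hy
    have ht : y = Real.exp (Real.log y) := (Real.exp_log hy).symm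
    set t := Real.log y with htdef
    rw [ht]
    set u := t - a with hu_def
    have htu : t = u + a := by ring
    have hexp : Real.exp t = Real.exp a * Real.exp u := by
      rw [htu, Real.exp_add]; ring
    have hkey : Real.exp u * (1 - u) ≤ 1 := by
      have h1 : 1 - u ≤ Real.exp (-u) := by
        have := Real.add_one_le_exp (-u); linarith
      calc Real.exp u * (1 - u) ≤ Real.exp u * Real.exp (-u) := by
            exact mul_le_mul_of_nonneg_left h1 (Real.exp_pos u).le
        _ = 1 := by rw [← Real.exp_add]; simp
    have hea : (0:ℝ) < Real.exp a := Real.exp_pos a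
    have heu : (0:ℝ) < Real.exp u := Real.exp_pos u
    rw [hexp, htu]
    nlinarith [mul_nonneg (mul_nonneg hea.le (by linarith : (0:ℝ) ≤ a - 1)) (by linarith : (0:ℝ) ≤ 1 - Real.exp u * (1 - u)),
      mul_nonneg (mul_nonneg hea.le heu.le) (sq_nonneg u)]
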